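/- Let E and F be valued vector spaces over a valued field K, and define the tensor product valuation on E ⊗_K F as (u_E ⊗ u_F)(z) = sup over all presentations z = Σ_i x_i ⊗ y_i of min_i (u_E(x_i) + u_F(y_i)). Then u_E ⊗ u_F is a vector space valuation on E ⊗_K F and it is the least valuation w satisfying w(x ⊗ y) ≥ u_E(x) + u_F(y) for all simple tensors. -/

import Mathlib

open scoped TensorProduct

/-- The tensor product valuation on `E ⊗[K] F`:
`(u_E ⊗ u_F)(z) = sup over presentations z = Σ_i x_i ⊗ y_i of min_i (u_E x_i + u_F y_i)`.
Presentations are coded by lists of pairs. -/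
noncomputable def tensVal {K E F : Type*} [Field K]
    [AddCommGroup E] [Module K E] [AddCommGroup F] [Module K F]
    (uE : E → EReal) (uF : F → EReal) (z : E ⊗[K] F) : EReal :=
  sSup { r : EReal | ∃ P : List (E × F),
    (P.map fun p => p.1 ⊗ₜ[K] p.2).sum = z ∧
    r = (P.map fun p => uE p.1 + uF p.2).foldr min ⊤ }

/-- foldr min over a list of non-bot entries is non-bot. -/
lemma foldr_min_ne_bot (l : List EReal) (h : ∀ x ∈ l, x ≠ ⊥) : l.foldr min ⊤ ≠ ⊥ := by
  induction l with
  | nil => simp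
  | cons a l ih =>
    simp only [List.foldr_cons]
    intro hb
    rcases min_eq_iff.mp hb with ⟨h1, _⟩ | ⟨h1, _⟩
    · exact h a List.mem_cons_self h1
    · exact ih (fun x hx => h x (List.mem_cons_of_mem a hx)) h1

lemma add_min_eq (c x y : EReal) : c + min x y = min (c + x) (c + y) := by
  rcases le_total x y with hxy | hxy
  · rw [min_eq_left hxy, min_eq_left (add_le_add_right hxy c)]
  · rw [min_eq_right hxy, min_eq_right (add_le_add_right hxy c)]

lemma add_foldr_min (c : EReal) (hc : c ≠ ⊥) (l : List EReal) :
    (l.map (c + ·)).foldr min ⊤ = c + l.foldr min ⊤ := by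
  induction l with
  | nil => simp [EReal.add_top_of_ne_bot hc]
  | cons a l ih => simp only [List.map_cons, List.foldr_cons, ih, add_min_eq]

lemma foldr_min_eq_min (l : List EReal) (b : EReal) :
    l.foldr min b = min (l.foldr min ⊤) b := by
  induction l with
  | nil => simp
  | cons a l ih => simp only [List.foldr_cons, ih, min_assoc]

lemma exists_pres {K E F : Type*} [Field K]
    [AddCommGroup E] [Module K E] [AddCommGroup F] [Module K F] (z : E ⊗[K] F) :
    ∃ P : List (E × F), (P.map fun p => p.1 ⊗ₜ[K] p.2).sum = z := by
  induction z using TensorProduct.induction_on with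
  | zero => exact ⟨[], rfl⟩
  | tmul x y => exact ⟨[(x, y)], by simp⟩
  | add a b ha hb =>
    obtain ⟨P, hP⟩ := ha
    obtain ⟨Q, hQ⟩ := hb
    exact ⟨P ++ Q, by simp [hP, hQ]⟩

lemma add_sSup_le {c : EReal} (hc : c ≠ ⊥) {S : Set EReal}
    (hSbot : ∀ r ∈ S, r ≠ ⊥) {T : EReal} (h : ∀ r ∈ S, c + r ≤ T) :
    c + sSup S ≤ T := by
  induction c with
  | bot => exact absurd rfl hc
  | coe c =>
    rw [add_comm]
    have hs : sSup S ≤ T - (c : EReal) := by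
      refine sSup_le fun r hr => ?_
      exact (EReal.le_sub_iff_add_le (Or.inl (EReal.coe_ne_bot c))
        (Or.inl (EReal.coe_ne_top c))).2 (by rw [add_comm]; exact h r hr)
    exact (EReal.le_sub_iff_add_le (Or.inl (EReal.coe_ne_bot c))
      (Or.inl (EReal.coe_ne_top c))).1 hs
  | top =>
    rcases Set.eq_empty_or_nonempty S with rfl | ⟨r, hr⟩
    · rw [sSup_empty, EReal.add_bot]
      exact bot_le
    · have := h r hr
      rw [EReal.top_add_of_ne_bot (hSbot r hr)] at this
      exact le_top.trans this

/-- the tensor product valuation is a vector space valuation on `E ⊗[K] F`,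
it satisfies `(u_E ⊗ u_F)(x ⊗ y) ≥ u_E x + u_F y`, and it is the least valuation doing so. -/
theorem tensVal_is_least_valuation {K E F : Type*} [Field K]
    [AddCommGroup E] [Module K E] [AddCommGroup F] [Module K F]
    (v : K → EReal) (hv0 : v 0 = ⊤) (hvbot : ∀ a, v a ≠ ⊥)
    (hvmul : ∀ a b, v (a * b) = v a + v b)
    (hvadd : ∀ a b, min (v a) (v b) ≤ v (a + b))
    (uE : E → EReal) (uEbot : ∀ x, uE x ≠ ⊥)
    (uEsmul : ∀ (a : K) (x : E), uE (a • x) = v a + uE x)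
    (uEadd : ∀ x y, min (uE x) (uE y) ≤ uE (x + y))
    (uF : F → EReal) (uFbot : ∀ y, uF y ≠ ⊥)
    (uFsmul : ∀ (a : K) (y : F), uF (a • y) = v a + uF y)
    (uFadd : ∀ x y, min (uF x) (uF y) ≤ uF (x + y)) :
    (∀ (a : K) (z : E ⊗[K] F), tensVal uE uF (a • z) = v a + tensVal uE uF z) ∧
    (∀ z w : E ⊗[K] F, min (tensVal uE uF z) (tensVal uE uF w) ≤ tensVal uE uF (z + w)) ∧
    (∀ (x : E) (y : F), uE x + uF y ≤ tensVal uE uF (x ⊗ₜ[K] y)) ∧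
    (∀ w : E ⊗[K] F → EReal,
      (∀ (a : K) (z : E ⊗[K] F), w (a • z) = v a + w z) →
      (∀ z z' : E ⊗[K] F, min (w z) (w z') ≤ w (z + z')) →
      (∀ (x : E) (y : F), uE x + uF y ≤ w (x ⊗ₜ[K] y)) →
      ∀ z, tensVal uE uF z ≤ w z) := by
  -- abbreviations
  have memS : ∀ (z : E ⊗[K] F) (P : List (E × F)),
      (P.map fun p => p.1 ⊗ₜ[K] p.2).sum = z →
      (P.map fun p => uE p.1 + uF p.2).foldr min ⊤ ≤ tensVal uE uF z :=
    fun z P h => le_sSup ⟨P, h, rfl⟩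
  have entries_ne_bot : ∀ P : List (E × F),
      ∀ x ∈ P.map (fun p => uE p.1 + uF p.2), x ≠ ⊥ := by
    intro P x hx
    simp only [List.mem_map] at hx
    obtain ⟨p, _, rfl⟩ := hx
    intro h
    exact (uEbot p.1) ((EReal.add_eq_bot_iff.mp h).resolve_right (uFbot p.2))
  have Sbot : ∀ (z : E ⊗[K] F), ∀ r ∈ { r : EReal | ∃ P : List (E × F),
      (P.map fun p => p.1 ⊗ₜ[K] p.2).sum = z ∧
      r = (P.map fun p => uE p.1 + uF p.2).foldr min ⊤ }, r ≠ ⊥ := by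
    rintro z r ⟨P, _, rfl⟩
    exact foldr_min_ne_bot _ (entries_ne_bot P)
  have ne_bot : ∀ z : E ⊗[K] F, tensVal uE uF z ≠ ⊥ := by
    intro z hb
    obtain ⟨P, hP⟩ := exists_pres z
    have := memS z P hP
    rw [hb, le_bot_iff] at this
    exact foldr_min_ne_bot _ (entries_ne_bot P) this
  -- key scaling inequality
  have key : ∀ (a : K) (z : E ⊗[K] F),
      v a + tensVal uE uF z ≤ tensVal uE uF (a • z) := by
    intro a z
    refine add_sSup_le (hvbot a) (Sbot z) ?_
    rintro r ⟨P, hP, rfl⟩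
    have hsum : ((P.map fun p => (a • p.1, p.2)).map fun p => p.1 ⊗ₜ[K] p.2).sum = a • z := by
      rw [← hP, List.smul_sum]
      simp [List.map_map, Function.comp_def, TensorProduct.smul_tmul']
    have hval : ((P.map fun p => (a • p.1, p.2)).map fun p => uE p.1 + uF p.2).foldr min ⊤
        = v a + (P.map fun p => uE p.1 + uF p.2).foldr min ⊤ := by
      rw [← add_foldr_min (v a) (hvbot a)]
      simp [List.map_map, Function.comp_def, uEsmul, add_assoc]
    rw [← hval]
    exact memS _ _ hsum
  have tv0 : tensVal uE uF (0 : E ⊗[K] F) = ⊤ :=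
    le_antisymm le_top (by simpa using memS 0 [] rfl)
  refine ⟨?_, ?_, ?_, ?_⟩
  · -- scaling
    intro a z
    rcases eq_or_ne a 0 with rfl | ha
    · rw [hv0, zero_smul, EReal.top_add_of_ne_bot (ne_bot z), tv0]
    · refine le_antisymm ?_ (key a z)
      have h1 := key a⁻¹ (a • z)
      rw [smul_smul, inv_mul_cancel₀ ha, one_smul] at h1
      have h2 : v a + (v a⁻¹ + tensVal uE uF (a • z)) ≤ v a + tensVal uE uF z :=
        add_le_add_right h1 _
      rw [← add_assoc, ← hvmul, mul_inv_cancel₀ ha] at h2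
      have hv1 : v 1 = 0 ∨ v 1 = ⊤ := by
        have h := hvmul 1 1
        rw [mul_one] at h
        rcases eq_or_ne (v 1) ⊤ with ht | ht
        · exact Or.inr ht
        · left
          obtain ⟨c, hc⟩ := (EReal.canLift.prf (v 1) ⟨ht, hvbot 1⟩)
          rw [← hc] at h ⊢
          have hcc : c = c + c := by exact_mod_cast h
          have : c = 0 := by linarith
          exact_mod_cast this
      rcases hv1 with hv1 | hv1
      · rwa [hv1, zero_add] at h2
      · rw [hv1, EReal.top_add_of_ne_bot (ne_bot _)] at h2
        exact le_top.trans h2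
  · -- additivity
    intro z w
    by_contra hlt
    push_neg at hlt
    obtain ⟨r, ⟨P, hP, hr⟩, hrlt⟩ :=
      lt_sSup_iff.mp (hlt.trans_le (min_le_left _ _))
    obtain ⟨s, ⟨Q, hQ, hs⟩, hslt⟩ :=
      lt_sSup_iff.mp (hlt.trans_le (min_le_right _ _))
    have hle : (((P ++ Q).map fun p => uE p.1 + uF p.2).foldr min ⊤)
        ≤ tensVal uE uF (z + w) := memS _ (P ++ Q) (by simp [hP, hQ])
    rw [List.map_append, List.foldr_append, foldr_min_eq_min] at hle
    rw [← hr, ← hs] at hle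
    exact absurd (lt_of_lt_of_le (lt_min hrlt hslt) hle) (lt_irrefl _)
  · -- simple tensors
    intro x y
    refine le_sSup ⟨[(x, y)], by simp, ?_⟩
    simp
  · -- least
    intro w hws hwa hwt z
    have uE0 : uE 0 = ⊤ := by
      have h := uEsmul 0 0
      rwa [zero_smul, hv0, EReal.top_add_of_ne_bot (uEbot 0)] at h
    have uF0 : uF 0 = ⊤ := by
      have h := uFsmul 0 0
      rwa [zero_smul, hv0, EReal.top_add_of_ne_bot (uFbot 0)] at h
    have hw0 : w 0 = ⊤ := by
      have h := hwt 0 0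
      rw [uE0, uF0, TensorProduct.zero_tmul] at h
      simpa using le_antisymm le_top (by simpa using h)
    have main : ∀ P : List (E × F),
        (P.map fun p => uE p.1 + uF p.2).foldr min ⊤
          ≤ w ((P.map fun p => p.1 ⊗ₜ[K] p.2).sum) := by
      intro P
      induction P with
      | nil => simp [hw0]
      | cons p P ih =>
        simp only [List.map_cons, List.foldr_cons, List.sum_cons]
        exact le_trans (min_le_min (hwt p.1 p.2) ih) (hwa _ _)
    refine sSup_le ?_
    rintro r ⟨P, hP, rfl⟩
    rw [← hP]
    exact main P
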